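/- arXiv:2404.13641 — 2 statements merged into one kernel-verified Lean document; each statement's English description precedes it below -/
import Mathlib

section
/- For every ε ∈ (0,1] and every x̂ ≥ 0, the integral ∫₀^{x̂} ((ε²x̂ + 1)/(ε²(x̂ − ŷ) + 1))^{3/2} · exp(−2ŷ) dŷ is bounded above by ∫₀^∞ (1 + ŷ)^{3/2} exp(−2ŷ) dŷ, which is finite. -/
open Real MeasureTheory intervalIntegral

lemma aux_int_rpow (s : ℝ) (hs : -1 < s) :
    IntegrableOn (fun y : ℝ => y ^ s * Real.exp (-2 * y)) (Set.Ioi (0 : ℝ)) := by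
  have := integrableOn_rpow_mul_exp_neg_mul_rpow (p := 1) (s := s) (b := 2) hs zero_lt_one
    (by norm_num)
  simpa [Real.rpow_one] using this

lemma aux_g_integrable :
    IntegrableOn (fun y : ℝ => (1 + y) ^ ((3 : ℝ) / 2) * Real.exp (-2 * y))
      (Set.Ioi (0 : ℝ)) := by
  have h0 := aux_int_rpow 0 (by norm_num)
  have h1 := aux_int_rpow 1 (by norm_num)
  have h2 := aux_int_rpow 2 (by norm_num)
  have hmaj : IntegrableOn (fun y : ℝ => (1 + 2 * y + y ^ 2) * Real.exp (-2 * y))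
      (Set.Ioi (0 : ℝ)) := by
    have h := (h0.add (h1.const_mul 2)).add h2
    apply MeasureTheory.IntegrableOn.congr_fun h ?_ measurableSet_Ioi
    intro y hy
    have hy0 : (0 : ℝ) < y := hy
    simp only [Pi.add_apply]
    rw [Real.rpow_zero, Real.rpow_one, show (2 : ℝ) = ((2 : ℕ) : ℝ) by norm_num,
      Real.rpow_natCast]
    ring
  refine hmaj.mono' ?_ ?_
  · apply ContinuousOn.aestronglyMeasurable ?_ measurableSet_Ioi
    apply ContinuousOn.mul ?_ (Continuous.continuousOn (by continuity))
    apply ContinuousOn.rpow_const (Continuous.continuousOn (by continuity))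
    intro y hy; right; norm_num
  · filter_upwards [MeasureTheory.ae_restrict_mem measurableSet_Ioi] with y hy
    have hy0 : (0 : ℝ) < y := hy
    have h1y : (1 : ℝ) ≤ 1 + y := by linarith
    have hb : (1 + y) ^ ((3 : ℝ) / 2) ≤ (1 + y) ^ ((2 : ℝ)) :=
      Real.rpow_le_rpow_of_exponent_le h1y (by norm_num)
    have hpos : (0 : ℝ) ≤ (1 + y) ^ ((3 : ℝ) / 2) := Real.rpow_nonneg (by linarith) _
    rw [Real.norm_eq_abs, abs_of_nonneg (mul_nonneg hpos (Real.exp_pos _).le)]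
    have : (1 + y) ^ ((2 : ℝ)) = 1 + 2 * y + y ^ 2 := by
      rw [show (2 : ℝ) = ((2 : ℕ) : ℝ) by norm_num, Real.rpow_natCast]; ring
    rw [this] at hb
    exact mul_le_mul_of_nonneg_right hb (Real.exp_pos _).le

theorem preasymptotic_bound (ε : ℝ) (hε0 : 0 < ε) (hε1 : ε ≤ 1) (x : ℝ) (hx : 0 ≤ x) :
    (∫ y in (0 : ℝ)..x,
        ((ε ^ 2 * x + 1) / (ε ^ 2 * (x - y) + 1)) ^ ((3 : ℝ) / 2) * Real.exp (-2 * y)) ≤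
      (∫ y in Set.Ioi (0 : ℝ), (1 + y) ^ ((3 : ℝ) / 2) * Real.exp (-2 * y)) ∧
    IntegrableOn (fun y : ℝ => (1 + y) ^ ((3 : ℝ) / 2) * Real.exp (-2 * y))
      (Set.Ioi (0 : ℝ)) := by
  have hg := aux_g_integrable
  refine ⟨?_, hg⟩
  set f : ℝ → ℝ := fun y =>
    ((ε ^ 2 * x + 1) / (ε ^ 2 * (x - y) + 1)) ^ ((3 : ℝ) / 2) * Real.exp (-2 * y) with hf_def
  set g : ℝ → ℝ := fun y => (1 + y) ^ ((3 : ℝ) / 2) * Real.exp (-2 * y) with hg_def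
  have huIcc : Set.uIcc (0 : ℝ) x = Set.Icc 0 x := Set.uIcc_of_le hx
  have hfc : ContinuousOn f (Set.Icc 0 x) := by
    apply ContinuousOn.mul ?_ (Continuous.continuousOn (by continuity))
    apply ContinuousOn.rpow_const
    · apply ContinuousOn.div continuousOn_const
      · exact Continuous.continuousOn (by continuity)
      · intro y hy
        have : 0 ≤ ε ^ 2 * (x - y) := mul_nonneg (sq_nonneg ε) (by linarith [hy.2])
        positivity
    · intro y hy; right; norm_num
  have hgc : ContinuousOn g (Set.Icc 0 x) := by
    apply ContinuousOn.mul ?_ (Continuous.continuousOn (by continuity))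
    apply ContinuousOn.rpow_const (Continuous.continuousOn (by continuity))
    intro y hy; right; norm_num
  have hfint : IntervalIntegrable f volume 0 x := by
    apply ContinuousOn.intervalIntegrable; rwa [huIcc]
  have hgint : IntervalIntegrable g volume 0 x := by
    apply ContinuousOn.intervalIntegrable; rwa [huIcc]
  have step1 : (∫ y in (0 : ℝ)..x, f y) ≤ ∫ y in (0 : ℝ)..x, g y := by
    apply intervalIntegral.integral_mono_on hx hfint hgint
    intro y hy
    have hy0 : 0 ≤ y := hy.1
    have hyx : y ≤ x := hy.2
    have hD : (0 : ℝ) < ε ^ 2 * (x - y) + 1 := by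
      have : 0 ≤ ε ^ 2 * (x - y) := mul_nonneg (sq_nonneg ε) (by linarith)
      linarith
    have hdiv : (ε ^ 2 * x + 1) / (ε ^ 2 * (x - y) + 1) ≤ 1 + y := by
      rw [div_le_iff₀ hD]
      nlinarith [mul_nonneg hy0 (sub_nonneg.2 (show ε ^ 2 ≤ 1 by nlinarith)),
        mul_nonneg (mul_nonneg hy0 (sq_nonneg ε)) (sub_nonneg.2 hyx)]
    have hbase : (0 : ℝ) ≤ (ε ^ 2 * x + 1) / (ε ^ 2 * (x - y) + 1) := by
      apply div_nonneg ?_ hD.le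
      nlinarith [sq_nonneg ε]
    have := Real.rpow_le_rpow hbase hdiv (by norm_num : (0:ℝ) ≤ 3/2)
    exact mul_le_mul_of_nonneg_right this (Real.exp_pos _).le
  have step2 : (∫ y in (0 : ℝ)..x, g y) ≤ ∫ y in Set.Ioi (0 : ℝ), g y := by
    rw [intervalIntegral.integral_of_le hx]
    apply MeasureTheory.setIntegral_mono_set hg
    · filter_upwards [MeasureTheory.ae_restrict_mem measurableSet_Ioi] with y hy
      have hy0 : (0 : ℝ) < y := hy
      have : (0 : ℝ) ≤ (1 + y) ^ ((3 : ℝ) / 2) := Real.rpow_nonneg (by linarith) _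
      exact mul_nonneg this (Real.exp_pos _).le
    · exact HasSubset.Subset.eventuallyLE Set.Ioc_subset_Ioi_self
  exact le_trans step1 step2
end

section
/- Let ε > 0 and let B : [1,∞) → ℝ be differentiable with B(1) = 4, B ≥ 0, and satisfying the differential inequality dB/dx − (3/2)·B/x ≤ C·ε²·B^{1/2}/x² for all x ≥ 1, where C > 0 is a constant and ε ≤ 1. Then (B(x)/x^{3/2})^{1/2} ≤ 2 + C·ε² for all x ≥ 1; in particular B(x) ≤ (2 + C)²·x^{3/2}. -/
open Real

theorem gronwall_fourth_moment (ε C : ℝ) (hε0 : 0 < ε) (hε1 : ε ≤ 1) (hC : 0 < C)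
    (B B' : ℝ → ℝ) (hB1 : B 1 = 4) (hBpos : ∀ x : ℝ, 1 ≤ x → 0 ≤ B x)
    (hderiv : ∀ x : ℝ, 1 ≤ x → HasDerivAt B (B' x) x)
    (hineq : ∀ x : ℝ, 1 ≤ x →
      B' x - (3 / 2) * B x / x ≤ C * ε ^ 2 * Real.sqrt (B x) / x ^ 2) :
    ∀ x : ℝ, 1 ≤ x →
      Real.sqrt (B x / x ^ ((3 : ℝ) / 2)) ≤ 2 + C * ε ^ 2 ∧
        B x ≤ (2 + C) ^ 2 * x ^ ((3 : ℝ) / 2) := by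
  intro b hb
  set K := C * ε ^ 2 with hKdef
  have hK0 : 0 < K := by positivity
  have hε2 : ε ^ 2 ≤ 1 := by nlinarith
  have hKC : K ≤ C := by rw [hKdef]; nlinarith
  set u : ℝ → ℝ := fun t => 2 + 4 / 7 * K * (1 - t ^ (-(7:ℝ)/4)) with hudef
  set ψ : ℝ → ℝ := fun t => (u t) ^ 2 * t ^ ((3:ℝ)/2) with hψdef
  set ψ' : ℝ → ℝ := fun t =>
    2 * u t * (K * t ^ (-(11:ℝ)/4)) * t ^ ((3:ℝ)/2)
      + (u t) ^ 2 * ((3/2) * t ^ ((1:ℝ)/2)) with hψ'def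
  -- basic facts about u
  have hu2 : ∀ t : ℝ, 1 ≤ t → 2 ≤ u t := by
    intro t ht
    have h1 : t ^ (-(7:ℝ)/4) ≤ 1 := by
      apply Real.rpow_le_one_of_one_le_of_nonpos ht
      norm_num
    simp only [hudef]
    nlinarith
  have huK : ∀ t : ℝ, 1 ≤ t → u t ≤ 2 + K := by
    intro t ht
    have h0 : 0 ≤ t ^ (-(7:ℝ)/4) := Real.rpow_nonneg (by linarith) _
    simp only [hudef]
    nlinarith
  have huderiv : ∀ t : ℝ, 0 < t → HasDerivAt u (K * t ^ (-(11:ℝ)/4)) t := by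
    intro t ht
    have h : HasDerivAt (fun s : ℝ => s ^ (-(7:ℝ)/4))
        ((-(7:ℝ)/4) * t ^ ((-(7:ℝ)/4) - 1)) t :=
      Real.hasDerivAt_rpow_const (Or.inl (ne_of_gt ht))
    have h2 : HasDerivAt u (4/7 * K * (0 - ((-(7:ℝ)/4) * t ^ ((-(7:ℝ)/4) - 1)))) t := by
      simpa [hudef] using ((hasDerivAt_const t (1:ℝ)).sub h).const_mul (4/7 * K) |>.const_add 2
    convert h2 using 1
    have : (-(7:ℝ)/4) - 1 = -(11:ℝ)/4 := by norm_num
    rw [this]; ring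
  have hψderiv : ∀ t : ℝ, 0 < t → HasDerivAt ψ (ψ' t) t := by
    intro t ht
    have h1 : HasDerivAt (fun s => (u s) ^ 2) (2 * u t * (K * t ^ (-(11:ℝ)/4))) t := by
      simpa [mul_comm, Pi.pow_def] using ((huderiv t ht).pow 2)
    have h2 : HasDerivAt (fun s : ℝ => s ^ ((3:ℝ)/2)) ((3:ℝ)/2 * t ^ ((3:ℝ)/2 - 1)) t :=
      Real.hasDerivAt_rpow_const (Or.inl (ne_of_gt ht))
    have h3 := h1.mul h2
    convert h3 using 1
    · rfl
    · rfl
    · rfl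
    have : (3:ℝ)/2 - 1 = (1:ℝ)/2 := by norm_num
    simp only [hψ'def, this]
  -- the comparison
  have key : ∀ x : ℝ, 1 ≤ x → x ≤ b → B x ≤ ψ x := by
    intro x hx1 hxb
    have hmem : x ∈ Set.Icc 1 b := ⟨hx1, hxb⟩
    refine image_le_of_deriv_right_lt_deriv_boundary' (f := B) (f' := B') (B := ψ) (B' := ψ') (a := 1) (b := b)
      ?_ ?_ ?_ ?_ ?_ ?_ hmem
    · intro y hy
      exact (hderiv y hy.1).continuousAt.continuousWithinAt
    · intro y hy
      exact (hderiv y hy.1).hasDerivWithinAt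
    · -- B 1 ≤ ψ 1
      have h1 : ψ 1 = 4 := by norm_num [hψdef, hudef]
      rw [hB1, h1]
    · intro y hy
      exact ((hψderiv y (by linarith [hy.1])).continuousAt).continuousWithinAt
    · intro y hy
      exact (hψderiv y (by linarith [hy.1])).hasDerivWithinAt
    · intro y hy heq
      have hy1 : (1:ℝ) ≤ y := hy.1
      have hy0 : (0:ℝ) < y := by linarith
      have hu2y : 2 ≤ u y := hu2 y hy1
      -- rpow identities
      have e1 : y ^ ((3:ℝ)/2) = y ^ ((1:ℝ)/2) * y := by
        rw [show (3:ℝ)/2 = 1/2 + 1 by norm_num, Real.rpow_add hy0, Real.rpow_one]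
      have e2 : y ^ ((3:ℝ)/4) = y ^ (-(5:ℝ)/4) * y ^ (2:ℕ) := by
        rw [show (3:ℝ)/4 = -(5:ℝ)/4 + (2:ℝ) by norm_num, Real.rpow_add hy0]
        rw [show ((2:ℝ)) = ((2:ℕ):ℝ) by norm_num, Real.rpow_natCast]
      have e3 : y ^ (-(11:ℝ)/4) * y ^ ((3:ℝ)/2) = y ^ (-(5:ℝ)/4) := by
        rw [← Real.rpow_add hy0]
        norm_num
      -- sqrt of ψ
      have hsq : Real.sqrt (B y) = u y * y ^ ((3:ℝ)/4) := by
        rw [heq]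
        have : ψ y = (u y * y ^ ((3:ℝ)/4)) ^ 2 := by
          simp only [hψdef]
          rw [mul_pow, ← Real.rpow_natCast (y ^ ((3:ℝ)/4)) 2, ← Real.rpow_mul hy0.le]
          norm_num
        rw [this, Real.sqrt_sq (by positivity)]
      have hiy := hineq y hy1
      rw [hsq, heq] at hiy
      -- now show B' y < ψ' y
      have hBy' : B' y ≤ (3/2) * ψ y / y + K * (u y * y ^ ((3:ℝ)/4)) / y ^ 2 := by linarith
      have hyne : (y:ℝ) ≠ 0 := ne_of_gt hy0
      have hval : (3/2) * ψ y / y + K * (u y * y ^ ((3:ℝ)/4)) / y ^ 2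
          = (u y) ^ 2 * ((3/2) * y ^ ((1:ℝ)/2)) + K * u y * y ^ (-(5:ℝ)/4) := by
        simp only [hψdef]
        rw [e1, e2]
        field_simp
      have hpos : 0 < K * u y * y ^ (-(5:ℝ)/4) := by
        have := Real.rpow_pos_of_pos hy0 (-(5:ℝ)/4)
        positivity
      have hψ'val : ψ' y = (u y) ^ 2 * ((3/2) * y ^ ((1:ℝ)/2)) + 2 * (K * u y * y ^ (-(5:ℝ)/4)) := by
        simp only [hψ'def]
        rw [mul_assoc (2 * u y), mul_assoc K, e3]
        ring
      rw [hψ'val]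
      rw [hval] at hBy'
      linarith
  -- conclude
  have hb0 : (0:ℝ) < b := by linarith
  have hkey := key b hb le_rfl
  have hub : u b ≤ 2 + K := huK b hb
  have hu2b : 2 ≤ u b := hu2 b hb
  have hbp : (0:ℝ) < b ^ ((3:ℝ)/2) := Real.rpow_pos_of_pos hb0 _
  constructor
  · have h1 : B b / b ^ ((3:ℝ)/2) ≤ (u b) ^ 2 := by
      rw [div_le_iff₀ hbp]
      simpa [hψdef] using hkey
    calc Real.sqrt (B b / b ^ ((3:ℝ)/2)) ≤ Real.sqrt ((u b) ^ 2) := Real.sqrt_le_sqrt h1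
      _ = u b := Real.sqrt_sq (by linarith)
      _ ≤ 2 + K := hub
  · have h2 : (u b) ^ 2 ≤ (2 + C) ^ 2 := by nlinarith
    have : ψ b ≤ (2 + C) ^ 2 * b ^ ((3:ℝ)/2) := by
      simp only [hψdef]
      exact mul_le_mul_of_nonneg_right h2 hbp.le
    linarith
end
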